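/- Proximal inference update as KL projection onto a surrogate (Theorem 2): for η > 0 there exists a constant C, independent of Y, such that for every Y ∈ ℝⁿ, D_KL(N(Y,Σ) ‖ 𝕐*) + (1/η) D_KL(N(Y,Σ) ‖ N(Y_k,Σ)) = ((η+1)/η) D_KL(N(Y,Σ) ‖ 𝕐*_k) + C, where the surrogate target 𝕐*_k is the probability measure with density proportional to (exp(−S(y)) φ(y; 0, R⁻¹))^{η/(η+1)} · φ(y; Y_k, Σ)^{1/(η+1)}. Hence the proximal minimizer Y_{k+1} = argmin_Y [D_KL(N(Y,Σ) ‖ 𝕐*) + (1/η) D_KL(N(Y,Σ) ‖ N(Y_k,Σ))] coincides with argmin_Y D_KL(N(Y,Σ) ‖ 𝕐*_k). -/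

import Mathlib

open MeasureTheory Matrix Filter

noncomputable def gaussDensity {n : ℕ} (μ : Fin n → ℝ) (C : Matrix (Fin n) (Fin n) ℝ)
    (y : Fin n → ℝ) : ℝ :=
  (2 * Real.pi) ^ (-(n : ℝ) / 2) * C.det ^ (-(1 : ℝ) / 2) *
    Real.exp (-(1 / 2) * ((y - μ) ⬝ᵥ C⁻¹ *ᵥ (y - μ)))

noncomputable def gaussMeasure {n : ℕ} (μ : Fin n → ℝ) (C : Matrix (Fin n) (Fin n) ℝ) :
    Measure (Fin n → ℝ) :=
  volume.withDensity fun y => ENNReal.ofReal (gaussDensity μ C y)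

noncomputable def klDivD {n : ℕ} (p q : (Fin n → ℝ) → ℝ) : ℝ :=
  ∫ y, p y * Real.log (p y / q y)

section Aux

variable {n : ℕ}

lemma quadUpper (M : Matrix (Fin n) (Fin n) ℝ) :
    ∃ C : ℝ, 0 ≤ C ∧ ∀ x : Fin n → ℝ, |x ⬝ᵥ M *ᵥ x| ≤ C * ∑ i, x i ^ 2 := by
  refine ⟨∑ i, ∑ j, |M i j|, Finset.sum_nonneg fun i _ => Finset.sum_nonneg fun j _ => abs_nonneg _, fun x => ?_⟩
  have h1 : x ⬝ᵥ M *ᵥ x = ∑ i, ∑ j, x i * (M i j * x j) := by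
    simp [dotProduct, mulVec, Finset.mul_sum]
  rw [h1, Finset.sum_mul]
  refine (Finset.abs_sum_le_sum_abs _ _).trans (Finset.sum_le_sum fun i _ => ?_)
  rw [Finset.sum_mul]
  refine (Finset.abs_sum_le_sum_abs _ _).trans (Finset.sum_le_sum fun j _ => ?_)
  have hxx : |x i| * |x j| ≤ ∑ k, x k ^ 2 := by
    have h2 : |x i| * |x j| ≤ (x i ^ 2 + x j ^ 2) / 2 := by
      nlinarith [sq_nonneg (|x i| - |x j|), sq_abs (x i), sq_abs (x j)]
    refine h2.trans ?_
    have hi : x i ^ 2 ≤ ∑ k, x k ^ 2 := Finset.single_le_sum (fun k _ => sq_nonneg (x k)) (Finset.mem_univ i)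
    have hj : x j ^ 2 ≤ ∑ k, x k ^ 2 := Finset.single_le_sum (fun k _ => sq_nonneg (x k)) (Finset.mem_univ j)
    linarith
  calc |x i * (M i j * x j)| = |M i j| * (|x i| * |x j|) := by
        rw [abs_mul, abs_mul]; ring
    _ ≤ |M i j| * ∑ k, x k ^ 2 := by
        exact mul_le_mul_of_nonneg_left hxx (abs_nonneg _)

lemma quadLower (hn : 1 ≤ n) (M : Matrix (Fin n) (Fin n) ℝ) (hM : M.PosDef) :
    ∃ c : ℝ, 0 < c ∧ ∀ x : Fin n → ℝ, c * ∑ i, x i ^ 2 ≤ x ⬝ᵥ M *ᵥ x := by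
  classical
  set K : Set (Fin n → ℝ) := {x | ∑ i, x i ^ 2 = 1} with hK
  have hsumcont : Continuous fun x : Fin n → ℝ => ∑ i, x i ^ 2 := by
    continuity
  have hqcont : Continuous fun x : Fin n → ℝ => x ⬝ᵥ M *ᵥ x := by
    have : (fun x : Fin n → ℝ => x ⬝ᵥ M *ᵥ x) =
        fun x => ∑ i, x i * ∑ j, M i j * x j := by
      funext x; simp [dotProduct, mulVec]
    rw [this]; continuity
  have hKc : IsCompact K := by
    have hclosed : IsClosed K := isClosed_eq hsumcont continuous_const
    have hbdd : Bornology.IsBounded K := by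
      have : K ⊆ Metric.closedBall 0 1 := by
        intro x hx
        simp only [Metric.mem_closedBall, dist_zero_right]
        rw [pi_norm_le_iff_of_nonneg zero_le_one]
        intro i
        have hi : x i ^ 2 ≤ 1 := by
          have := Finset.single_le_sum (fun k _ => sq_nonneg (x k)) (Finset.mem_univ i)
          rw [hx] at this; linarith
        rw [Real.norm_eq_abs, ← Real.sqrt_one, ← Real.sqrt_sq_eq_abs]
        exact Real.sqrt_le_sqrt hi
      exact (Metric.isBounded_closedBall).subset this
    exact Metric.isCompact_of_isClosed_isBounded hclosed hbdd
  have hKne : K.Nonempty := by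
    refine ⟨Pi.single ⟨0, hn⟩ 1, ?_⟩
    simp [hK, Pi.single_apply, Finset.sum_ite_eq']
  obtain ⟨x₀, hx₀K, hx₀min⟩ := hKc.exists_isMinOn hKne hqcont.continuousOn
  have hx₀ne : x₀ ≠ 0 := by
    intro h
    have : ∑ i, x₀ i ^ 2 = 0 := by simp [h]
    rw [hx₀K] at this; norm_num at this
  refine ⟨x₀ ⬝ᵥ M *ᵥ x₀, hM.dotProduct_mulVec_pos hx₀ne, fun x => ?_⟩
  rcases eq_or_ne x 0 with rfl | hx
  · simp
  · set t : ℝ := Real.sqrt (∑ i, x i ^ 2) with ht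
    have hsum_pos : 0 < ∑ i, x i ^ 2 := by
      rcases Function.ne_iff.1 hx with ⟨i, hi⟩
      have : 0 < x i ^ 2 := sq_pos_of_ne_zero (by simpa using hi)
      exact this.trans_le (Finset.single_le_sum (fun k _ => sq_nonneg (x k)) (Finset.mem_univ i))
    have htpos : 0 < t := Real.sqrt_pos.2 hsum_pos
    have hmem : t⁻¹ • x ∈ K := by
      simp only [hK, Set.mem_setOf_eq, Pi.smul_apply, smul_eq_mul, mul_pow]
      rw [← Finset.mul_sum]
      rw [ht]
      rw [Real.sq_sqrt hsum_pos.le |>.symm]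
      field_simp
      rw [Real.sqrt_sq (Real.sqrt_nonneg _)]
    have hle := hx₀min hmem
    have hval : (t⁻¹ • x) ⬝ᵥ M *ᵥ (t⁻¹ • x) = t⁻¹ ^ 2 * (x ⬝ᵥ M *ᵥ x) := by
      rw [smul_dotProduct, mulVec_smul, dotProduct_smul]
      simp [smul_eq_mul]; ring
    simp only [Set.mem_setOf_eq] at hle
    rw [hval] at hle
    have ht2 : t ^ 2 = ∑ i, x i ^ 2 := Real.sq_sqrt hsum_pos.le
    have := mul_le_mul_of_nonneg_left hle (le_of_lt (by positivity : (0:ℝ) < t ^ 2))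
    rw [← mul_assoc] at this
    have h3 : t ^ 2 * t⁻¹ ^ 2 = 1 := by field_simp
    rw [h3, one_mul] at this
    rw [← ht2]
    calc x₀ ⬝ᵥ M *ᵥ x₀ * t ^ 2 = t ^ 2 * (x₀ ⬝ᵥ M *ᵥ x₀) := by ring
      _ ≤ x ⬝ᵥ M *ᵥ x := this

lemma quadShiftBound (M : Matrix (Fin n) (Fin n) ℝ) (ν : Fin n → ℝ) :
    ∃ K : ℝ, 0 ≤ K ∧ ∀ y : Fin n → ℝ,
      |(y - ν) ⬝ᵥ M *ᵥ (y - ν)| ≤ K * (1 + ∑ i, y i ^ 2) := by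
  obtain ⟨C, hC0, hC⟩ := quadUpper M
  refine ⟨C * (2 + 2 * ∑ i, ν i ^ 2), by positivity, fun y => ?_⟩
  have hs : ∑ i, (y - ν) i ^ 2 ≤ 2 * (∑ i, y i ^ 2) + 2 * ∑ i, ν i ^ 2 := by
    have h1 : ∀ i : Fin n, (y - ν) i ^ 2 ≤ 2 * y i ^ 2 + 2 * ν i ^ 2 := by
      intro i
      have : (y - ν) i = y i - ν i := by simp
      rw [this]; nlinarith [sq_nonneg (y i + ν i)]
    calc ∑ i, (y - ν) i ^ 2 ≤ ∑ i, (2 * y i ^ 2 + 2 * ν i ^ 2) :=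
          Finset.sum_le_sum fun i _ => h1 i
      _ = 2 * (∑ i, y i ^ 2) + 2 * ∑ i, ν i ^ 2 := by
          rw [Finset.sum_add_distrib, ← Finset.mul_sum, ← Finset.mul_sum]
  have hy : (0:ℝ) ≤ ∑ i, y i ^ 2 := Finset.sum_nonneg fun i _ => sq_nonneg _
  have hν : (0:ℝ) ≤ ∑ i, ν i ^ 2 := Finset.sum_nonneg fun i _ => sq_nonneg _
  calc |(y - ν) ⬝ᵥ M *ᵥ (y - ν)| ≤ C * ∑ i, (y - ν) i ^ 2 := hC _
    _ ≤ C * (2 * (∑ i, y i ^ 2) + 2 * ∑ i, ν i ^ 2) := mul_le_mul_of_nonneg_left hs hC0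
    _ ≤ C * (2 + 2 * ∑ i, ν i ^ 2) * (1 + ∑ i, y i ^ 2) := by
        nlinarith [mul_nonneg hC0 (mul_nonneg hν hy)]

lemma integrableSqExp1d {c : ℝ} (hc : 0 < c) :
    Integrable (fun x : ℝ => x ^ 2 * Real.exp (-c * x ^ 2)) := by
  have := integrable_rpow_mul_exp_neg_mul_sq hc (s := 2) (by norm_num)
  have heq : (fun x : ℝ => x ^ (2:ℝ) * Real.exp (-c * x ^ 2)) =
      fun x : ℝ => x ^ 2 * Real.exp (-c * x ^ 2) := by
    funext x
    rw [show (2:ℝ) = ((2:ℕ):ℝ) by norm_num, Real.rpow_natCast]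
  rwa [heq] at this

lemma integrableGauss {c : ℝ} (hc : 0 < c) :
    Integrable (fun y : Fin n → ℝ => Real.exp (-c * ∑ i, y i ^ 2)) := by
  have heq : (fun y : Fin n → ℝ => Real.exp (-c * ∑ i, y i ^ 2)) =
      fun y : Fin n → ℝ => ∏ i, Real.exp (-c * (y i) ^ 2) := by
    funext y
    rw [← Real.exp_sum, Finset.mul_sum]
  rw [heq]
  exact Integrable.fintype_prod fun i => integrable_exp_neg_mul_sq hc

lemma integrableGaussSq {c : ℝ} (hc : 0 < c) :
    Integrable (fun y : Fin n → ℝ => Real.exp (-c * ∑ i, y i ^ 2) * ∑ i, y i ^ 2) := by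
  classical
  have heq : (fun y : Fin n → ℝ => Real.exp (-c * ∑ i, y i ^ 2) * ∑ i, y i ^ 2) =
      fun y : Fin n → ℝ => ∑ j, ∏ i, ((if i = j then (y i) ^ 2 else 1) * Real.exp (-c * (y i) ^ 2)) := by
    funext y
    rw [Finset.mul_sum]
    refine Finset.sum_congr rfl fun j _ => ?_
    rw [Finset.prod_mul_distrib, Finset.prod_ite_eq' Finset.univ j (fun i => (y i) ^ 2),
      ← Real.exp_sum]
    simp [Finset.mul_sum]
    ring
  rw [heq]
  refine integrable_finset_sum _ fun j _ => ?_
  refine Integrable.fintype_prod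
    (f := fun i x => (if i = j then x ^ 2 else 1) * Real.exp (-c * x ^ 2)) fun i => ?_
  by_cases h : i = j
  · subst h; simpa using integrableSqExp1d hc
  · simpa [h] using integrable_exp_neg_mul_sq hc

lemma integrableOfGaussBound {h : (Fin n → ℝ) → ℝ}
    (hmeas : AEStronglyMeasurable h (volume : Measure (Fin n → ℝ)))
    {c K : ℝ} (hc : 0 < c)
    (hb : ∀ y, |h y| ≤ K * Real.exp (-c * ∑ i, y i ^ 2)) :
    Integrable h := by
  refine Integrable.mono' ((integrableGauss hc).const_mul K) hmeas ?_
  exact Filter.Eventually.of_forall fun y => by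
    rw [Real.norm_eq_abs]; exact hb y

lemma integrableGaussMul (hn : 1 ≤ n) (M : Matrix (Fin n) (Fin n) ℝ) (hM : M.PosDef)
    (μ : Fin n → ℝ) (h : (Fin n → ℝ) → ℝ)
    (hmeas : AEStronglyMeasurable h (volume : Measure (Fin n → ℝ)))
    (K : ℝ) (hbound : ∀ y, |h y| ≤ K * (1 + ∑ i, y i ^ 2)) :
    Integrable (fun y : Fin n → ℝ =>
      Real.exp (-(1/2) * ((y - μ) ⬝ᵥ M *ᵥ (y - μ))) * h y) := by
  obtain ⟨c, hc, hlow⟩ := quadLower hn M hM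
  have hK : 0 ≤ K := by
    have h0 := (abs_nonneg (h 0)).trans (hbound 0)
    simpa using h0
  set K' : ℝ := K * Real.exp ((c/2) * ∑ i, μ i ^ 2) with hK'
  have hK'0 : 0 ≤ K' := by positivity
  have hexp_le : ∀ y : Fin n → ℝ,
      Real.exp (-(1/2) * ((y - μ) ⬝ᵥ M *ᵥ (y - μ))) ≤
        Real.exp ((c/2) * ∑ i, μ i ^ 2) * Real.exp (-(c/4) * ∑ i, y i ^ 2) := by
    intro y
    rw [← Real.exp_add]
    apply Real.exp_le_exp.2
    have h1 : c * ∑ i, (y - μ) i ^ 2 ≤ (y - μ) ⬝ᵥ M *ᵥ (y - μ) := hlow _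
    have h2 : (∑ i, y i ^ 2) / 2 - ∑ i, μ i ^ 2 ≤ ∑ i, (y - μ) i ^ 2 := by
      have : ∀ i, y i ^ 2 / 2 - μ i ^ 2 ≤ (y i - μ i) ^ 2 := by
        intro i; nlinarith [sq_nonneg (y i - 2 * μ i)]
      calc (∑ i, y i ^ 2) / 2 - ∑ i, μ i ^ 2
          = ∑ i, (y i ^ 2 / 2 - μ i ^ 2) := by
            rw [Finset.sum_sub_distrib, Finset.sum_div]
        _ ≤ ∑ i, (y i - μ i) ^ 2 := Finset.sum_le_sum fun i _ => this i
        _ = ∑ i, (y - μ) i ^ 2 := by simp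
    nlinarith
  refine Integrable.mono' (g := fun y =>
      K' * Real.exp (-(c/4) * ∑ i, y i ^ 2) +
      K' * (Real.exp (-(c/4) * ∑ i, y i ^ 2) * ∑ i, y i ^ 2)) ?_ ?_ ?_
  · exact ((integrableGauss (by positivity)).const_mul K').add
      ((integrableGaussSq (by positivity)).const_mul K')
  · have hcont : Continuous fun y : Fin n → ℝ =>
        Real.exp (-(1/2) * ((y - μ) ⬝ᵥ M *ᵥ (y - μ))) := by
      have : Continuous fun y : Fin n → ℝ => (y - μ) ⬝ᵥ M *ᵥ (y - μ) := by
        have : (fun y : Fin n → ℝ => (y - μ) ⬝ᵥ M *ᵥ (y - μ)) =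
            fun y => ∑ i, (y i - μ i) * ∑ j, M i j * (y j - μ j) := by
          funext y; simp [dotProduct, mulVec]
        rw [this]; continuity
      exact (continuous_const.mul this).rexp
    exact hcont.aestronglyMeasurable.mul hmeas
  · refine Filter.Eventually.of_forall fun y => ?_
    have hsum : (0:ℝ) ≤ ∑ i, y i ^ 2 := Finset.sum_nonneg fun i _ => sq_nonneg _
    have hbd := hbound y
    have hle := hexp_le y
    have hepos : (0:ℝ) < Real.exp (-(1/2) * ((y - μ) ⬝ᵥ M *ᵥ (y - μ))) := Real.exp_pos _
    rw [norm_mul, Real.norm_eq_abs, Real.norm_eq_abs, abs_of_pos hepos]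
    calc Real.exp (-(1/2) * ((y - μ) ⬝ᵥ M *ᵥ (y - μ))) * |h y|
        ≤ (Real.exp ((c/2) * ∑ i, μ i ^ 2) * Real.exp (-(c/4) * ∑ i, y i ^ 2)) *
            (K * (1 + ∑ i, y i ^ 2)) := by
          exact mul_le_mul hle hbd (abs_nonneg _) (by positivity)
      _ = K' * Real.exp (-(c/4) * ∑ i, y i ^ 2) +
          K' * (Real.exp (-(c/4) * ∑ i, y i ^ 2) * ∑ i, y i ^ 2) := by
          rw [hK']; ring

lemma continuousQuad (M : Matrix (Fin n) (Fin n) ℝ) (ν : Fin n → ℝ) :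
    Continuous fun y : Fin n → ℝ => (y - ν) ⬝ᵥ M *ᵥ (y - ν) := by
  have : (fun y : Fin n → ℝ => (y - ν) ⬝ᵥ M *ᵥ (y - ν)) =
      fun y => ∑ i, (y i - ν i) * ∑ j, M i j * (y j - ν j) := by
    funext y; simp [dotProduct, mulVec]
  rw [this]; continuity

lemma continuousGaussDensity (μ : Fin n → ℝ) (C : Matrix (Fin n) (Fin n) ℝ) :
    Continuous (gaussDensity μ C) := by
  unfold gaussDensity
  exact continuous_const.mul ((continuous_const.mul (continuousQuad C⁻¹ μ)).rexp)

lemma klDivD_div_const (p q : (Fin n → ℝ) → ℝ) (Z : ℝ)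
    (hp : ∀ y, 0 < p y) (hq : ∀ y, 0 < q y) (hZ : 0 < Z)
    (h1 : Integrable (fun y => p y * Real.log (p y)))
    (h2 : Integrable (fun y => p y * Real.log (q y)))
    (h3 : Integrable p) :
    klDivD p (fun y => q y / Z) =
      (∫ y, p y * Real.log (p y)) - (∫ y, p y * Real.log (q y)) +
        Real.log Z * ∫ y, p y := by
  unfold klDivD
  have heq : (fun y => p y * Real.log (p y / (q y / Z))) =
      fun y => (p y * Real.log (p y) - p y * Real.log (q y)) + Real.log Z * p y := by
    funext y
    rw [Real.log_div (hp y).ne' (div_ne_zero (hq y).ne' hZ.ne'),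
      Real.log_div (hq y).ne' hZ.ne']
    ring
  have h12 : Integrable (fun y => p y * Real.log (p y) - p y * Real.log (q y)) :=
    h1.sub h2
  rw [heq, integral_add h12 (h3.const_mul _), integral_sub h1 h2, MeasureTheory.integral_const_mul]

lemma klDivD_decomp (p q : (Fin n → ℝ) → ℝ)
    (hp : ∀ y, 0 < p y) (hq : ∀ y, 0 < q y)
    (h1 : Integrable (fun y => p y * Real.log (p y)))
    (h2 : Integrable (fun y => p y * Real.log (q y))) :
    klDivD p q = (∫ y, p y * Real.log (p y)) - ∫ y, p y * Real.log (q y) := by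
  unfold klDivD
  have heq : (fun y => p y * Real.log (p y / q y)) =
      fun y => p y * Real.log (p y) - p y * Real.log (q y) := by
    funext y
    rw [Real.log_div (hp y).ne' (hq y).ne']
    ring
  rw [heq, integral_sub h1 h2]

end Aux

set_option maxHeartbeats 1000000 in
/-- Proximal inference update as KL projection onto a surrogate (Theorem 2): for `η > 0`
there is a constant `C`, independent of `Y`, with
`D_KL(N(Y,Σ)‖𝕐*) + (1/η) D_KL(N(Y,Σ)‖N(Y_k,Σ)) = ((η+1)/η) D_KL(N(Y,Σ)‖𝕐*_k) + C`,
where `𝕐*_k ∝ (exp(−S) φ(·;0,R⁻¹))^{η/(η+1)} φ(·;Y_k,Σ)^{1/(η+1)}`; hence the proximal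
minimizer coincides with the KL projection onto the surrogate. -/
theorem proximal_inference_update {n : ℕ} (hn : 1 ≤ n)
    (R Cov : Matrix (Fin n) (Fin n) ℝ) (hR : R.PosDef) (hCov : Cov.PosDef)
    (S : (Fin n → ℝ) → ℝ) (hSmeas : Measurable S) (hSbdd : ∃ M, ∀ y, |S y| ≤ M)
    (Yk : Fin n → ℝ) (η : ℝ) (hη : 0 < η) :
    ∃ C : ℝ,
      (∀ Y : Fin n → ℝ,
        klDivD (gaussDensity Y Cov)
            (fun y => Real.exp (-S y) * gaussDensity 0 R⁻¹ y /
              ∫ z, Real.exp (-S z) * gaussDensity 0 R⁻¹ z)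
          + (1 / η) * klDivD (gaussDensity Y Cov) (gaussDensity Yk Cov) =
        ((η + 1) / η) * klDivD (gaussDensity Y Cov)
            (fun y => (Real.exp (-S y) * gaussDensity 0 R⁻¹ y) ^ (η / (η + 1)) *
                gaussDensity Yk Cov y ^ (1 / (η + 1)) /
              ∫ z, (Real.exp (-S z) * gaussDensity 0 R⁻¹ z) ^ (η / (η + 1)) *
                gaussDensity Yk Cov z ^ (1 / (η + 1)))
          + C) ∧
      (∀ Y₁ Y₂ : Fin n → ℝ,
        (klDivD (gaussDensity Y₁ Cov)
            (fun y => Real.exp (-S y) * gaussDensity 0 R⁻¹ y /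
              ∫ z, Real.exp (-S z) * gaussDensity 0 R⁻¹ z)
          + (1 / η) * klDivD (gaussDensity Y₁ Cov) (gaussDensity Yk Cov) ≤
         klDivD (gaussDensity Y₂ Cov)
            (fun y => Real.exp (-S y) * gaussDensity 0 R⁻¹ y /
              ∫ z, Real.exp (-S z) * gaussDensity 0 R⁻¹ z)
          + (1 / η) * klDivD (gaussDensity Y₂ Cov) (gaussDensity Yk Cov)) ↔
        (klDivD (gaussDensity Y₁ Cov)
            (fun y => (Real.exp (-S y) * gaussDensity 0 R⁻¹ y) ^ (η / (η + 1)) *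
                gaussDensity Yk Cov y ^ (1 / (η + 1)) /
              ∫ z, (Real.exp (-S z) * gaussDensity 0 R⁻¹ z) ^ (η / (η + 1)) *
                gaussDensity Yk Cov z ^ (1 / (η + 1))) ≤
         klDivD (gaussDensity Y₂ Cov)
            (fun y => (Real.exp (-S y) * gaussDensity 0 R⁻¹ y) ^ (η / (η + 1)) *
                gaussDensity Yk Cov y ^ (1 / (η + 1)) /
              ∫ z, (Real.exp (-S z) * gaussDensity 0 R⁻¹ z) ^ (η / (η + 1)) *
                gaussDensity Yk Cov z ^ (1 / (η + 1))))) := by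
  classical
  obtain ⟨M₀, hM₀⟩ := hSbdd
  have hM₀0 : 0 ≤ M₀ := (abs_nonneg _).trans (hM₀ 0)
  have hη1 : (0:ℝ) < η + 1 := by linarith
  -- basic constants
  have hπ : (0:ℝ) < 2 * Real.pi := by positivity
  set Kp : ℝ := (2 * Real.pi) ^ (-(n : ℝ) / 2) * Cov.det ^ (-(1 : ℝ) / 2) with hKp_def
  have hKp : 0 < Kp :=
    mul_pos (Real.rpow_pos_of_pos hπ _) (Real.rpow_pos_of_pos hCov.det_pos _)
  have hRinvdet : 0 < (R⁻¹).det := hR.inv.det_pos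
  set KR : ℝ := (2 * Real.pi) ^ (-(n : ℝ) / 2) * (R⁻¹).det ^ (-(1 : ℝ) / 2) with hKR_def
  have hKR : 0 < KR :=
    mul_pos (Real.rpow_pos_of_pos hπ _) (Real.rpow_pos_of_pos hRinvdet _)
  have hRR : (R⁻¹)⁻¹ = R :=
    Matrix.nonsing_inv_nonsing_inv R (isUnit_iff_ne_zero.2 hR.det_pos.ne')
  -- density formulas
  have hpdef : ∀ (Y : Fin n → ℝ) (y : Fin n → ℝ), gaussDensity Y Cov y
      = Kp * Real.exp (-(1/2) * ((y - Y) ⬝ᵥ Cov⁻¹ *ᵥ (y - Y))) := by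
    intro Y y; rfl
  have hφR : ∀ y : Fin n → ℝ, gaussDensity 0 R⁻¹ y
      = KR * Real.exp (-(1/2) * (y ⬝ᵥ R *ᵥ y)) := by
    intro y; unfold gaussDensity; rw [hRR, sub_zero]
  have hppos : ∀ (Y : Fin n → ℝ) (y : Fin n → ℝ), 0 < gaussDensity Y Cov y := by
    intro Y y; rw [hpdef Y y]; positivity
  set f : (Fin n → ℝ) → ℝ := fun y => Real.exp (-S y) * gaussDensity 0 R⁻¹ y with hf_def
  have hfpos : ∀ y, 0 < f y := by
    intro y
    exact mul_pos (Real.exp_pos _) (by rw [hφR y]; positivity)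
  set g : (Fin n → ℝ) → ℝ := fun y => gaussDensity Yk Cov y with hg_def
  have hgpos : ∀ y, 0 < g y := fun y => hppos Yk y
  set w : (Fin n → ℝ) → ℝ :=
    fun y => f y ^ (η / (η + 1)) * g y ^ (1 / (η + 1)) with hw_def
  have hwpos : ∀ y, 0 < w y := fun y =>
    mul_pos (Real.rpow_pos_of_pos (hfpos y) _) (Real.rpow_pos_of_pos (hgpos y) _)
  -- quadratic form bounds
  obtain ⟨cR, hcR, hlowR⟩ := quadLower hn R hR
  obtain ⟨cC, hcC, hlowC⟩ := quadLower hn Cov⁻¹ hCov.inv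
  -- measurability
  have hf_meas0 : Measurable f :=
    (hSmeas.neg.exp).mul (continuousGaussDensity 0 R⁻¹).measurable
  have hg_meas0 : Measurable g := (continuousGaussDensity Yk Cov).measurable
  have hw_eq : w = fun y => Real.exp (Real.log (f y) * (η / (η + 1))) *
      Real.exp (Real.log (g y) * (1 / (η + 1))) := by
    funext y
    show f y ^ (η / (η + 1)) * g y ^ (1 / (η + 1)) = _
    rw [Real.rpow_def_of_pos (hfpos y), Real.rpow_def_of_pos (hgpos y)]
  have hw_meas0 : Measurable w := by
    rw [hw_eq]
    exact (((Real.measurable_log.comp hf_meas0).mul_const _).exp).mul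
      (((Real.measurable_log.comp hg_meas0).mul_const _).exp)
  -- integrability of f
  have hf_bound : ∀ y : Fin n → ℝ,
      |f y| ≤ (Real.exp M₀ * KR) * Real.exp (-(cR/2) * ∑ i, y i ^ 2) := by
    intro y
    rw [abs_of_pos (hfpos y)]
    have h1 : Real.exp (-S y) ≤ Real.exp M₀ := by
      apply Real.exp_le_exp.2
      have := hM₀ y; rw [abs_le] at this; linarith [this.1]
    have h2 : Real.exp (-(1/2) * (y ⬝ᵥ R *ᵥ y)) ≤ Real.exp (-(cR/2) * ∑ i, y i ^ 2) := by
      apply Real.exp_le_exp.2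
      have := hlowR y; linarith
    calc f y = Real.exp (-S y) * (KR * Real.exp (-(1/2) * (y ⬝ᵥ R *ᵥ y))) := by
          rw [hf_def]; simp only []; rw [hφR y]
      _ ≤ Real.exp M₀ * (KR * Real.exp (-(cR/2) * ∑ i, y i ^ 2)) := by
          exact mul_le_mul h1 (mul_le_mul_of_nonneg_left h2 hKR.le) (by positivity)
            (Real.exp_pos _).le
      _ = (Real.exp M₀ * KR) * Real.exp (-(cR/2) * ∑ i, y i ^ 2) := by ring
  have hf_int : Integrable f :=
    integrableOfGaussBound hf_meas0.aestronglyMeasurable (by positivity) hf_bound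
  have hsupp_pos : ∀ (u : (Fin n → ℝ) → ℝ), (∀ y, 0 < u y) → Integrable u →
      0 < ∫ y, u y := by
    intro u hu hui
    rw [integral_pos_iff_support_of_nonneg (fun y => (hu y).le) hui]
    have : Function.support u = Set.univ := Set.eq_univ_of_forall fun y => (hu y).ne'
    rw [this]
    exact IsOpen.measure_pos volume isOpen_univ Set.univ_nonempty
  set Z₁ : ℝ := ∫ y, f y with hZ₁_def
  have hZ₁_pos : 0 < Z₁ := hsupp_pos f hfpos hf_int
  -- integrability of w
  have hw_bound : ∀ y : Fin n → ℝ,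
      |w y| ≤ ((Real.exp M₀ * KR) ^ (η / (η + 1)) * Kp ^ (1 / (η + 1))) *
        Real.exp (-((η / (η + 1)) * (cR/2)) * ∑ i, y i ^ 2) := by
    intro y
    rw [abs_of_pos (hwpos y)]
    have h1 : f y ^ (η / (η + 1)) ≤
        ((Real.exp M₀ * KR) * Real.exp (-(cR/2) * ∑ i, y i ^ 2)) ^ (η / (η + 1)) := by
      apply Real.rpow_le_rpow (hfpos y).le ?_ (by positivity)
      have := hf_bound y; rwa [abs_of_pos (hfpos y)] at this
    have h1' : ((Real.exp M₀ * KR) * Real.exp (-(cR/2) * ∑ i, y i ^ 2)) ^ (η / (η + 1))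
        = (Real.exp M₀ * KR) ^ (η / (η + 1)) *
          Real.exp (-((η / (η + 1)) * (cR/2)) * ∑ i, y i ^ 2) := by
      rw [Real.mul_rpow (by positivity) (Real.exp_pos _).le, ← Real.exp_mul]
      ring_nf
    have h2 : g y ^ (1 / (η + 1)) ≤ Kp ^ (1 / (η + 1)) := by
      apply Real.rpow_le_rpow (hgpos y).le ?_ (by positivity)
      have hq : 0 ≤ (y - Yk) ⬝ᵥ Cov⁻¹ *ᵥ (y - Yk) := by
        have := hlowC (y - Yk)
        have h0 : (0:ℝ) ≤ cC * ∑ i, (y - Yk) i ^ 2 := by positivity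
        linarith
      have : g y = Kp * Real.exp (-(1/2) * ((y - Yk) ⬝ᵥ Cov⁻¹ *ᵥ (y - Yk))) := hpdef Yk y
      rw [this]
      have : Real.exp (-(1/2) * ((y - Yk) ⬝ᵥ Cov⁻¹ *ᵥ (y - Yk))) ≤ 1 := by
        rw [Real.exp_le_one_iff]; nlinarith
      nlinarith [hKp]
    calc w y = f y ^ (η / (η + 1)) * g y ^ (1 / (η + 1)) := rfl
      _ ≤ ((Real.exp M₀ * KR) ^ (η / (η + 1)) *
            Real.exp (-((η / (η + 1)) * (cR/2)) * ∑ i, y i ^ 2)) * Kp ^ (1 / (η + 1)) := by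
          rw [← h1']
          exact mul_le_mul h1 h2 (Real.rpow_nonneg (hgpos y).le _) (by positivity)
      _ = ((Real.exp M₀ * KR) ^ (η / (η + 1)) * Kp ^ (1 / (η + 1))) *
            Real.exp (-((η / (η + 1)) * (cR/2)) * ∑ i, y i ^ 2) := by ring
  have hw_int : Integrable w :=
    integrableOfGaussBound hw_meas0.aestronglyMeasurable (by positivity) hw_bound
  set Z₃ : ℝ := ∫ y, w y with hZ₃_def
  have hZ₃_pos : 0 < Z₃ := hsupp_pos w hwpos hw_int
  -- translation invariance
  set I₀ : ℝ := ∫ y, gaussDensity (0 : Fin n → ℝ) Cov y with hI₀_def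
  have hI₀ : ∀ Y : Fin n → ℝ, (∫ y, gaussDensity Y Cov y) = I₀ := by
    intro Y
    have hYy : ∀ y : Fin n → ℝ, gaussDensity Y Cov y = gaussDensity 0 Cov (y - Y) := by
      intro y; unfold gaussDensity; rw [sub_zero]
    rw [hI₀_def]
    calc (∫ y, gaussDensity Y Cov y) = ∫ y, gaussDensity 0 Cov (y - Y) := by
          simp_rw [hYy]
      _ = ∫ y, gaussDensity 0 Cov y := integral_sub_right_eq_self _ _
  -- log formulas
  have hlogp : ∀ (Y : Fin n → ℝ) (y : Fin n → ℝ), Real.log (gaussDensity Y Cov y)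
      = Real.log Kp + (-(1/2) * ((y - Y) ⬝ᵥ Cov⁻¹ *ᵥ (y - Y))) := by
    intro Y y
    rw [hpdef Y y, Real.log_mul hKp.ne' (Real.exp_pos _).ne', Real.log_exp]
  have hlogf : ∀ y : Fin n → ℝ, Real.log (f y)
      = -S y + (Real.log KR + (-(1/2) * (y ⬝ᵥ R *ᵥ y))) := by
    intro y
    have : f y = Real.exp (-S y) * (KR * Real.exp (-(1/2) * (y ⬝ᵥ R *ᵥ y))) := by
      rw [hf_def]; simp only []; rw [hφR y]
    rw [this, Real.log_mul (Real.exp_pos _).ne' (by positivity), Real.log_exp,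
      Real.log_mul hKR.ne' (Real.exp_pos _).ne', Real.log_exp]
  have hlogw : ∀ y : Fin n → ℝ, Real.log (w y)
      = (η / (η + 1)) * Real.log (f y) + (1 / (η + 1)) * Real.log (gaussDensity Yk Cov y) := by
    intro y
    have : w y = f y ^ (η / (η + 1)) * g y ^ (1 / (η + 1)) := rfl
    rw [this, Real.log_mul (Real.rpow_pos_of_pos (hfpos y) _).ne'
      (Real.rpow_pos_of_pos (hgpos y) _).ne',
      Real.log_rpow (hfpos y), Real.log_rpow (hgpos y)]
  -- generic integrability against the Gaussian
  have key_int : ∀ (Y : Fin n → ℝ) (r : (Fin n → ℝ) → ℝ),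
      AEStronglyMeasurable r (volume : Measure (Fin n → ℝ)) →
      (∃ K, ∀ y, |r y| ≤ K * (1 + ∑ i, y i ^ 2)) →
      Integrable (fun y => gaussDensity Y Cov y * r y) := by
    rintro Y r hrm ⟨K, hK⟩
    have hint := integrableGaussMul hn Cov⁻¹ hCov.inv Y (fun y => Kp * r y)
      (aestronglyMeasurable_const.mul hrm) (|Kp| * K) ?_
    · refine hint.congr (Filter.Eventually.of_forall fun y => ?_)
      simp only [hpdef Y]; ring
    · intro y
      rw [abs_mul, mul_assoc]
      exact mul_le_mul_of_nonneg_left (hK y) (abs_nonneg _)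
  have int_p : ∀ Y : Fin n → ℝ, Integrable (gaussDensity Y Cov) := by
    intro Y
    have := key_int Y (fun _ => 1) aestronglyMeasurable_const
      ⟨1, fun y => by
        have : (0:ℝ) ≤ ∑ i, y i ^ 2 := Finset.sum_nonneg fun i _ => sq_nonneg _
        rw [abs_one]; nlinarith⟩
    simpa using this
  have int_plog : ∀ Y Y' : Fin n → ℝ,
      Integrable (fun y => gaussDensity Y Cov y * Real.log (gaussDensity Y' Cov y)) := by
    intro Y Y'
    obtain ⟨Kq, hKq0, hKq⟩ := quadShiftBound Cov⁻¹ Y'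
    have hrm : Measurable fun y : Fin n → ℝ => Real.log (gaussDensity Y' Cov y) :=
      Real.measurable_log.comp (continuousGaussDensity Y' Cov).measurable
    apply key_int Y _ hrm.aestronglyMeasurable
    refine ⟨|Real.log Kp| + Kq, fun y => ?_⟩
    rw [hlogp Y' y]
    have hs : (0:ℝ) ≤ ∑ i, y i ^ 2 := Finset.sum_nonneg fun i _ => sq_nonneg _
    have h1 := hKq y
    have habs : |Real.log Kp + (-(1/2) * ((y - Y') ⬝ᵥ Cov⁻¹ *ᵥ (y - Y')))|
        ≤ |Real.log Kp| + (1/2) * |(y - Y') ⬝ᵥ Cov⁻¹ *ᵥ (y - Y')| := by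
      refine (abs_add_le _ _).trans ?_
      rw [abs_mul, show |(-(1/2):ℝ)| = 1/2 from by norm_num]
    nlinarith [abs_nonneg (Real.log Kp)]
  have int_plogf : ∀ Y : Fin n → ℝ,
      Integrable (fun y => gaussDensity Y Cov y * Real.log (f y)) := by
    intro Y
    obtain ⟨Kq, hKq0, hKq⟩ := quadShiftBound R 0
    have hrm : Measurable fun y : Fin n → ℝ => Real.log (f y) :=
      Real.measurable_log.comp hf_meas0
    apply key_int Y _ hrm.aestronglyMeasurable
    refine ⟨M₀ + |Real.log KR| + Kq, fun y => ?_⟩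
    rw [hlogf y]
    have hs : (0:ℝ) ≤ ∑ i, y i ^ 2 := Finset.sum_nonneg fun i _ => sq_nonneg _
    have h1 := hKq y
    rw [sub_zero] at h1
    have habs : |(-S y) + (Real.log KR + (-(1/2) * (y ⬝ᵥ R *ᵥ y)))|
        ≤ M₀ + (|Real.log KR| + (1/2) * |y ⬝ᵥ R *ᵥ y|) := by
      refine (abs_add_le _ _).trans (add_le_add ?_ ((abs_add_le _ _).trans (add_le_add_right ?_ _)))
      · rw [abs_neg]; exact hM₀ y
      · rw [abs_mul, show |(-(1/2):ℝ)| = 1/2 from by norm_num]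
    nlinarith [abs_nonneg (Real.log KR)]
  have int_plogw : ∀ Y : Fin n → ℝ,
      Integrable (fun y => gaussDensity Y Cov y * Real.log (w y)) := by
    intro Y
    have hcomb := (((int_plogf Y).const_mul (η / (η + 1))).add
      ((int_plog Y Yk).const_mul (1 / (η + 1))))
    refine hcomb.congr (Filter.Eventually.of_forall fun y => ?_)
    show (η / (η + 1)) * (gaussDensity Y Cov y * Real.log (f y))
        + (1 / (η + 1)) * (gaussDensity Y Cov y * Real.log (gaussDensity Yk Cov y))
      = gaussDensity Y Cov y * Real.log (w y)
    rw [hlogw y]; ring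
  -- the constant
  set Cconst : ℝ := Real.log Z₁ * I₀ - ((η + 1) / η) * (Real.log Z₃ * I₀) with hC_def
  have key : ∀ Y : Fin n → ℝ,
      klDivD (gaussDensity Y Cov)
          (fun y => Real.exp (-S y) * gaussDensity 0 R⁻¹ y /
            ∫ z, Real.exp (-S z) * gaussDensity 0 R⁻¹ z)
        + (1 / η) * klDivD (gaussDensity Y Cov) (gaussDensity Yk Cov) =
      ((η + 1) / η) * klDivD (gaussDensity Y Cov)
          (fun y => (Real.exp (-S y) * gaussDensity 0 R⁻¹ y) ^ (η / (η + 1)) *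
              gaussDensity Yk Cov y ^ (1 / (η + 1)) /
            ∫ z, (Real.exp (-S z) * gaussDensity 0 R⁻¹ z) ^ (η / (η + 1)) *
              gaussDensity Yk Cov z ^ (1 / (η + 1)))
        + Cconst := by
    intro Y
    show klDivD (gaussDensity Y Cov) (fun y => f y / Z₁)
        + (1 / η) * klDivD (gaussDensity Y Cov) (gaussDensity Yk Cov) =
      ((η + 1) / η) * klDivD (gaussDensity Y Cov) (fun y => w y / Z₃) + Cconst
    have hA := klDivD_div_const (gaussDensity Y Cov) f Z₁ (hppos Y) hfpos hZ₁_pos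
      (int_plog Y Y) (int_plogf Y) (int_p Y)
    have hB := klDivD_decomp (gaussDensity Y Cov) (gaussDensity Yk Cov) (hppos Y)
      (hppos Yk) (int_plog Y Y) (int_plog Y Yk)
    have hD := klDivD_div_const (gaussDensity Y Cov) w Z₃ (hppos Y) hwpos hZ₃_pos
      (int_plog Y Y) (int_plogw Y) (int_p Y)
    rw [hA, hB, hD]
    have hIpw : (∫ y, gaussDensity Y Cov y * Real.log (w y))
        = (η / (η + 1)) * (∫ y, gaussDensity Y Cov y * Real.log (f y))
          + (1 / (η + 1)) * ∫ y, gaussDensity Y Cov y * Real.log (gaussDensity Yk Cov y) := by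
      have heq : (fun y => gaussDensity Y Cov y * Real.log (w y))
          = fun y => (η / (η + 1)) * (gaussDensity Y Cov y * Real.log (f y))
            + (1 / (η + 1)) * (gaussDensity Y Cov y * Real.log (gaussDensity Yk Cov y)) := by
        funext y; rw [hlogw y]; ring
      rw [heq, integral_add ((int_plogf Y).const_mul _) ((int_plog Y Yk).const_mul _),
        integral_const_mul, integral_const_mul]
    rw [hIpw, hI₀ Y, hC_def]
    field_simp
    ring
  exact ⟨Cconst, key, fun Y₁ Y₂ => by
    rw [key Y₁, key Y₂, add_le_add_iff_right,
      mul_le_mul_iff_right₀ (by positivity : (0:ℝ) < (η + 1) / η)]⟩
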